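/- Let F be a real n×p matrix and let k ≥ 1 be an even integer with 2.5k ≤ p satisfying δ_{1.5k} + θ_{k,1.5k} < 1. Let β ∈ ℝ^p and y = Fβ. If β̂ is a minimizer of ‖γ‖₁ over all γ ∈ ℝ^p with Fγ = y, then ‖β̂ − β‖₂ ≤ C₀ k^{−1/2} ‖β_{−max(k)}‖₁, where C₀ = 2√2(1 − δ_{1.5k}) / (1 − δ_{1.5k} − θ_{k,1.5k}). -/

import Mathlib

/-- A vector `v ∈ ℝ^p` is `k`-sparse if it has at most `k` nonzero entries. -/
def IsSparse {p : ℕ} (k : ℕ) (v : Fin p → ℝ) : Prop :=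
  ∃ s : Finset (Fin p), s.card ≤ k ∧ ∀ i ∉ s, v i = 0

/-- The ℓ₂ norm of a vector in `ℝ^m`. -/
noncomputable def l2norm {m : ℕ} (v : Fin m → ℝ) : ℝ :=
  Real.sqrt (∑ i, v i ^ 2)

/-- The ℓ₁ norm of a vector in `ℝ^m`. -/
def l1norm {m : ℕ} (v : Fin m → ℝ) : ℝ := ∑ i, |v i|

/-- The `k`-restricted isometry constant `δ_k` of `F`: the smallest `δ` such that
`√(1-δ)‖c‖₂ ≤ ‖Fc‖₂ ≤ √(1+δ)‖c‖₂` for every `k`-sparse vector `c`. -/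
noncomputable def ripConst {n p : ℕ} (F : Matrix (Fin n) (Fin p) ℝ) (k : ℕ) : ℝ :=
  sInf {δ : ℝ | ∀ c : Fin p → ℝ, IsSparse k c →
    Real.sqrt (1 - δ) * l2norm c ≤ l2norm (F.mulVec c) ∧
    l2norm (F.mulVec c) ≤ Real.sqrt (1 + δ) * l2norm c}

/-- The `(k,k')`-restricted orthogonality constant `θ_{k,k'}` of `F`: the smallest `θ` such
that `|⟨Fc, Fc'⟩| ≤ θ‖c‖₂‖c'‖₂` for all `k`-sparse `c` and `k'`-sparse `c'` with disjoint
supports. -/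
noncomputable def roConst {n p : ℕ} (F : Matrix (Fin n) (Fin p) ℝ) (k k' : ℕ) : ℝ :=
  sInf {θ : ℝ | ∀ c c' : Fin p → ℝ, IsSparse k c → IsSparse k' c' →
    (∀ i, c i = 0 ∨ c' i = 0) →
    |∑ i, F.mulVec c i * F.mulVec c' i| ≤ θ * (l2norm c * l2norm c')}

namespace NRAux

/-- restriction of a vector to a finset -/
def rst {p : ℕ} (A : Finset (Fin p)) (v : Fin p → ℝ) : Fin p → ℝ :=
  fun i => if i ∈ A then v i else 0

lemma l2norm_nonneg' {m : ℕ} (v : Fin m → ℝ) : 0 ≤ l2norm v := Real.sqrt_nonneg _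

lemma l2norm_sq {m : ℕ} (v : Fin m → ℝ) : l2norm v ^ 2 = ∑ i, v i ^ 2 :=
  Real.sq_sqrt (Finset.sum_nonneg fun _ _ => sq_nonneg _)

lemma le_of_sq_le_sq'' {a b : ℝ} (hb : 0 ≤ b) (h : a ^ 2 ≤ b ^ 2) (ha : 0 ≤ a) : a ≤ b := by
  nlinarith

lemma rst_sq_sum {p : ℕ} (A : Finset (Fin p)) (v : Fin p → ℝ) :
    l2norm (rst A v) ^ 2 = ∑ i ∈ A, v i ^ 2 := by
  rw [l2norm_sq]
  have h1 : ∀ i, (rst A v i) ^ 2 = if i ∈ A then v i ^ 2 else 0 := by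
    intro i; unfold rst; split <;> simp
  simp_rw [h1]
  rw [Finset.sum_ite_mem, Finset.univ_inter]

lemma rst_sparse {p : ℕ} (A : Finset (Fin p)) (v : Fin p → ℝ) {k : ℕ} (hA : A.card ≤ k) :
    IsSparse k (rst A v) :=
  ⟨A, hA, fun _ hi => if_neg hi⟩

lemma l2_mulVec_sq_le {n p : ℕ} (F : Matrix (Fin n) (Fin p) ℝ) (c : Fin p → ℝ) :
    l2norm (F.mulVec c) ^ 2 ≤ (∑ i, ∑ j, F i j ^ 2) * l2norm c ^ 2 := by
  rw [l2norm_sq, l2norm_sq]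
  calc ∑ k, F.mulVec c k ^ 2 ≤ ∑ k, ((∑ j, F k j ^ 2) * ∑ j, c j ^ 2) := by
        refine Finset.sum_le_sum fun k _ => ?_
        have h := Finset.sum_mul_sq_le_sq_mul_sq Finset.univ (F k) c
        simpa [Matrix.mulVec, dotProduct] using h
    _ = (∑ k, ∑ j, F k j ^ 2) * ∑ j, c j ^ 2 := by rw [Finset.sum_mul]

lemma l2norm_single {p : ℕ} (j : Fin p) :
    l2norm (fun i => if i = j then (1 : ℝ) else 0) = 1 := by
  unfold l2norm
  have h1 : ∀ i : Fin p, ((if i = j then (1:ℝ) else 0)) ^ 2 = if i = j then 1 else 0 := by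
    intro i; split <;> norm_num
  simp_rw [h1]
  simp

lemma ripConst_spec {n p : ℕ} (F : Matrix (Fin n) (Fin p) ℝ) (k : ℕ) (hk : 1 ≤ k)
    (hp : 0 < p) :
    ∀ c : Fin p → ℝ, IsSparse k c →
      Real.sqrt (1 - ripConst F k) * l2norm c ≤ l2norm (F.mulVec c) ∧
      l2norm (F.mulVec c) ≤ Real.sqrt (1 + ripConst F k) * l2norm c := by
  set K : ℝ := ∑ i, ∑ j, F i j ^ 2 with hKdef
  have hK : 0 ≤ K := by positivity
  set S : Set ℝ := {δ : ℝ | ∀ c : Fin p → ℝ, IsSparse k c →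
    Real.sqrt (1 - δ) * l2norm c ≤ l2norm (F.mulVec c) ∧
    l2norm (F.mulVec c) ≤ Real.sqrt (1 + δ) * l2norm c} with hSdef
  have hne : S.Nonempty := by
    refine ⟨K + 1, fun c _ => ⟨?_, ?_⟩⟩
    · have : Real.sqrt (1 - (K + 1)) = 0 := by
        rw [Real.sqrt_eq_zero']; linarith
      rw [this, zero_mul]; exact l2norm_nonneg' _
    · have h2 := l2_mulVec_sq_le F c
      refine le_of_sq_le_sq'' (mul_nonneg (Real.sqrt_nonneg _) (l2norm_nonneg' _)) ?_
        (l2norm_nonneg' _)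
      rw [mul_pow, Real.sq_sqrt (by linarith)]
      nlinarith [sq_nonneg (l2norm c)]
  have hbdd : BddBelow S := by
    refine ⟨-1, fun δ hδ => ?_⟩
    by_contra hlt
    push_neg at hlt
    set c : Fin p → ℝ := fun i => if i = (⟨0, hp⟩ : Fin p) then (1:ℝ) else 0 with hcdef
    have hsp : IsSparse k c := by
      refine ⟨{⟨0, hp⟩}, by simpa using hk, fun i hi => ?_⟩
      simp only [Finset.mem_singleton] at hi
      simp [hcdef, hi]
    have hc1 : l2norm c = 1 := l2norm_single _
    obtain ⟨hlow, hup⟩ := hδ c hsp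
    rw [hc1, mul_one] at hlow hup
    have hsq0 : Real.sqrt (1 + δ) = 0 := by
      rw [Real.sqrt_eq_zero']; linarith
    rw [hsq0] at hup
    have h0 : l2norm (F.mulVec c) = 0 := le_antisymm hup (l2norm_nonneg' _)
    rw [h0] at hlow
    have : 0 < Real.sqrt (1 - δ) := Real.sqrt_pos.mpr (by linarith)
    linarith
  have hclosed : IsClosed S := by
    have hrw : S = ⋂ (c : Fin p → ℝ) (_ : IsSparse k c),
        ({δ : ℝ | Real.sqrt (1 - δ) * l2norm c ≤ l2norm (F.mulVec c)} ∩
         {δ : ℝ | l2norm (F.mulVec c) ≤ Real.sqrt (1 + δ) * l2norm c}) := by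
      ext δ
      simp only [hSdef, Set.mem_setOf_eq, Set.mem_iInter, Set.mem_inter_iff]
    rw [hrw]
    refine isClosed_iInter fun c => isClosed_iInter fun _ => IsClosed.inter ?_ ?_
    · exact isClosed_le (by
        exact (Real.continuous_sqrt.comp (continuous_const.sub continuous_id)).mul
          continuous_const) continuous_const
    · exact isClosed_le continuous_const (by
        exact (Real.continuous_sqrt.comp (continuous_const.add continuous_id)).mul
          continuous_const)
  exact hclosed.csInf_mem hne hbdd

lemma roConst_spec {n p : ℕ} (F : Matrix (Fin n) (Fin p) ℝ) (k k' : ℕ)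
    (hk : 1 ≤ k) (hk' : 1 ≤ k') (hp : 2 ≤ p) :
    (0 ≤ roConst F k k') ∧
    ∀ c c' : Fin p → ℝ, IsSparse k c → IsSparse k' c' →
      (∀ i, c i = 0 ∨ c' i = 0) →
      |∑ i, F.mulVec c i * F.mulVec c' i| ≤ roConst F k k' * (l2norm c * l2norm c') := by
  set K : ℝ := ∑ i, ∑ j, F i j ^ 2 with hKdef
  have hK : 0 ≤ K := by positivity
  set S : Set ℝ := {θ : ℝ | ∀ c c' : Fin p → ℝ, IsSparse k c → IsSparse k' c' →
    (∀ i, c i = 0 ∨ c' i = 0) →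
    |∑ i, F.mulVec c i * F.mulVec c' i| ≤ θ * (l2norm c * l2norm c')} with hSdef
  have hne : S.Nonempty := by
    refine ⟨K, fun c c' _ _ _ => ?_⟩
    have hcs := Finset.sum_mul_sq_le_sq_mul_sq Finset.univ (F.mulVec c) (F.mulVec c')
    have h1 : |∑ i, F.mulVec c i * F.mulVec c' i|
        ≤ l2norm (F.mulVec c) * l2norm (F.mulVec c') := by
      refine le_of_sq_le_sq'' (mul_nonneg (l2norm_nonneg' _) (l2norm_nonneg' _)) ?_
        (abs_nonneg _)
      rw [sq_abs, mul_pow, l2norm_sq, l2norm_sq]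
      exact hcs
    have h2 : l2norm (F.mulVec c) ≤ Real.sqrt K * l2norm c := by
      refine le_of_sq_le_sq'' (mul_nonneg (Real.sqrt_nonneg _) (l2norm_nonneg' _)) ?_
        (l2norm_nonneg' _)
      rw [mul_pow, Real.sq_sqrt hK]
      exact l2_mulVec_sq_le F c
    have h3 : l2norm (F.mulVec c') ≤ Real.sqrt K * l2norm c' := by
      refine le_of_sq_le_sq'' (mul_nonneg (Real.sqrt_nonneg _) (l2norm_nonneg' _)) ?_
        (l2norm_nonneg' _)
      rw [mul_pow, Real.sq_sqrt hK]
      exact l2_mulVec_sq_le F c'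
    calc |∑ i, F.mulVec c i * F.mulVec c' i| ≤ l2norm (F.mulVec c) * l2norm (F.mulVec c') := h1
      _ ≤ (Real.sqrt K * l2norm c) * (Real.sqrt K * l2norm c') := by
          apply mul_le_mul h2 h3 (l2norm_nonneg' _)
            (mul_nonneg (Real.sqrt_nonneg _) (l2norm_nonneg' _))
      _ = (Real.sqrt K * Real.sqrt K) * (l2norm c * l2norm c') := by ring
      _ = K * (l2norm c * l2norm c') := by rw [Real.mul_self_sqrt hK]
  have hlb : ∀ θ ∈ S, 0 ≤ θ := by
    intro θ hθ
    have h0 : (0:ℕ) < p := by omega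
    have h1 : (1:ℕ) < p := by omega
    set c : Fin p → ℝ := fun i => if i = (⟨0, h0⟩ : Fin p) then (1:ℝ) else 0 with hcdef
    set c' : Fin p → ℝ := fun i => if i = (⟨1, h1⟩ : Fin p) then (1:ℝ) else 0 with hc'def
    have hsp : IsSparse k c := by
      refine ⟨{⟨0, h0⟩}, by simpa using hk, fun i hi => ?_⟩
      simp only [Finset.mem_singleton] at hi
      simp [hcdef, hi]
    have hsp' : IsSparse k' c' := by
      refine ⟨{⟨1, h1⟩}, by simpa using hk', fun i hi => ?_⟩
      simp only [Finset.mem_singleton] at hi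
      simp [hc'def, hi]
    have hdisj : ∀ i, c i = 0 ∨ c' i = 0 := by
      intro i
      by_cases hi : i = (⟨0, h0⟩ : Fin p)
      · right; simp [hc'def, hi]
      · left; simp [hcdef, hi]
    have := hθ c c' hsp hsp' hdisj
    rw [l2norm_single, l2norm_single] at this
    simp only [mul_one] at this
    exact le_trans (abs_nonneg _) this
  have hbdd : BddBelow S := ⟨0, hlb⟩
  have hclosed : IsClosed S := by
    have hrw : S = ⋂ (c : Fin p → ℝ) (c' : Fin p → ℝ) (_ : IsSparse k c) (_ : IsSparse k' c')
        (_ : ∀ i, c i = 0 ∨ c' i = 0),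
        {θ : ℝ | |∑ i, F.mulVec c i * F.mulVec c' i| ≤ θ * (l2norm c * l2norm c')} := by
      ext θ
      simp only [hSdef, Set.mem_setOf_eq, Set.mem_iInter]
    rw [hrw]
    refine isClosed_iInter fun c => isClosed_iInter fun c' => isClosed_iInter fun _ =>
      isClosed_iInter fun _ => isClosed_iInter fun _ => ?_
    exact isClosed_le continuous_const (continuous_id.mul continuous_const)
  exact ⟨le_csInf hne hlb, hclosed.csInf_mem hne hbdd⟩

/-- choose the `j` elements of `A` largest in `|g|` -/
lemma topSubset {p : ℕ} (g : Fin p → ℝ) :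
    ∀ (j : ℕ) (A : Finset (Fin p)), j ≤ A.card →
    ∃ B : Finset (Fin p), B ⊆ A ∧ B.card = j ∧
      ∀ i ∈ A \ B, ∀ i' ∈ B, |g i| ≤ |g i'| := by
  intro j
  induction j with
  | zero =>
    intro A _
    exact ⟨∅, Finset.empty_subset _, Finset.card_empty,
      fun i _ i' hi' => absurd hi' (Finset.notMem_empty _)⟩
  | succ j ih =>
    intro A hA
    obtain ⟨B, hBA, hBcard, hBtop⟩ := ih A (by omega)
    have hne : (A \ B).Nonempty := by
      apply Finset.card_pos.mp
      rw [Finset.card_sdiff_of_subset hBA, hBcard]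
      omega
    obtain ⟨i₀, hi₀m, hi₀max⟩ := Finset.exists_max_image (A \ B) (fun i => |g i|) hne
    have hi₀A : i₀ ∈ A := (Finset.mem_sdiff.mp hi₀m).1
    have hi₀B : i₀ ∉ B := (Finset.mem_sdiff.mp hi₀m).2
    refine ⟨insert i₀ B, ?_, ?_, ?_⟩
    · exact Finset.insert_subset hi₀A hBA
    · rw [Finset.card_insert_of_notMem hi₀B, hBcard]
    · intro i hi i' hi'
      have hiA : i ∈ A := (Finset.mem_sdiff.mp hi).1
      have hins : i ∉ insert i₀ B := (Finset.mem_sdiff.mp hi).2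
      have hiB : i ∉ B := fun h => hins (Finset.mem_insert_of_mem h)
      rcases Finset.mem_insert.mp hi' with h | h
      · subst h; exact hi₀max i (Finset.mem_sdiff.mpr ⟨hiA, hiB⟩)
      · exact hBtop i (Finset.mem_sdiff.mpr ⟨hiA, hiB⟩) i' h

lemma blockDecomp {n p m : ℕ} (F : Matrix (Fin n) (Fin p) ℝ) (θ : ℝ)
    (hθprop : ∀ c c' : Fin p → ℝ, IsSparse (2*m) c → IsSparse (3*m) c' →
      (∀ i, c i = 0 ∨ c' i = 0) →
      |∑ i, F.mulVec c i * F.mulVec c' i| ≤ θ * (l2norm c * l2norm c'))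
    (h u : Fin p → ℝ) (hu : IsSparse (3*m) u) (hm : 1 ≤ m) :
    ∀ (N : ℕ) (A : Finset (Fin p)), A.card ≤ N → (∀ i ∈ A, u i = 0) →
      ∀ c : ℝ, 0 ≤ c → (∀ i ∈ A, |h i| ≤ c) →
      ∃ S : ℝ, 0 ≤ S ∧
        S * Real.sqrt (2*(m:ℝ)) ≤ (m:ℝ) * c + ∑ i ∈ A, |h i| ∧
        |∑ k, F.mulVec (rst A h) k * F.mulVec u k| ≤ θ * (S * l2norm u) ∧
        ∑ i ∈ A, (h i)^2 ≤ S^2 := by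
  have hs2 : Real.sqrt (2*(m:ℝ)) ^ 2 = 2*(m:ℝ) := Real.sq_sqrt (by positivity)
  have hs0 : (0:ℝ) ≤ Real.sqrt (2*(m:ℝ)) := Real.sqrt_nonneg _
  have hm' : (1:ℝ) ≤ (m:ℝ) := by exact_mod_cast hm
  have base : ∀ (A : Finset (Fin p)), A.card ≤ 2*m → (∀ i ∈ A, u i = 0) →
      ∀ c : ℝ, 0 ≤ c → (∀ i ∈ A, |h i| ≤ c) →
      ∃ S : ℝ, 0 ≤ S ∧
        S * Real.sqrt (2*(m:ℝ)) ≤ (m:ℝ) * c + ∑ i ∈ A, |h i| ∧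
        |∑ k, F.mulVec (rst A h) k * F.mulVec u k| ≤ θ * (S * l2norm u) ∧
        ∑ i ∈ A, (h i)^2 ≤ S^2 := by
    intro A hsmall hAu c hc hAc
    refine ⟨l2norm (rst A h), l2norm_nonneg' _, ?_, ?_, (rst_sq_sum A h).symm.le⟩
    · set L1 : ℝ := ∑ i ∈ A, |h i| with hL1
      have hL1nn : 0 ≤ L1 := Finset.sum_nonneg fun _ _ => abs_nonneg _
      have hsq : l2norm (rst A h) ^ 2 ≤ c * L1 := by
        rw [rst_sq_sum]
        rw [hL1, Finset.mul_sum]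
        refine Finset.sum_le_sum fun i hi => ?_
        have := hAc i hi
        nlinarith [abs_nonneg (h i), sq_abs (h i)]
      refine le_of_sq_le_sq'' (by positivity) ?_
        (mul_nonneg (l2norm_nonneg' _) hs0)
      rw [mul_pow, hs2]
      nlinarith [sq_nonneg ((m:ℝ)*c - L1), sq_nonneg ((m:ℝ)*c + L1), mul_nonneg hc hL1nn]
    · have hdisj : ∀ i, rst A h i = 0 ∨ u i = 0 := by
        intro i
        by_cases hi : i ∈ A
        · exact Or.inr (hAu i hi)
        · exact Or.inl (if_neg hi)
      exact hθprop (rst A h) u (rst_sparse A h hsmall) hu hdisj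
  intro N
  induction N with
  | zero =>
    intro A hA hAu c hc hAc
    exact base A (by omega) hAu c hc hAc
  | succ N ih =>
    intro A hA hAu c hc hAc
    by_cases hsmall : A.card ≤ 2*m
    · exact base A hsmall hAu c hc hAc
    · push_neg at hsmall
      obtain ⟨B, hBA, hBcard, hBtop⟩ := topSubset h (2*m) A (by omega)
      have hBne : B.Nonempty := Finset.card_pos.mp (by omega)
      obtain ⟨i₁, hi₁B, hi₁min⟩ := Finset.exists_min_image B (fun i => |h i|) hBne
      set c' : ℝ := |h i₁| with hc'def
      have hc'nn : 0 ≤ c' := abs_nonneg _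
      have hRc' : ∀ i ∈ A \ B, |h i| ≤ c' := fun i hi => hBtop i hi i₁ hi₁B
      have h2mc' : 2*(m:ℝ) * c' ≤ ∑ i ∈ B, |h i| := by
        have := Finset.card_nsmul_le_sum B (fun i => |h i|) c' (fun i hi => hi₁min i hi)
        rw [hBcard] at this
        rw [nsmul_eq_mul] at this
        push_cast at this
        linarith
      have hcard' : (A \ B).card ≤ N := by
        rw [Finset.card_sdiff_of_subset hBA, hBcard]
        omega
      obtain ⟨S', hS'0, hS'bd, hS'θ, hS'sq⟩ :=
        ih (A \ B) hcard' (fun i hi => hAu i (Finset.mem_sdiff.mp hi).1) c' hc'nn hRc'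
      set xB : ℝ := l2norm (rst B h) with hxB
      have hxB0 : 0 ≤ xB := l2norm_nonneg' _
      refine ⟨xB + S', by positivity, ?_, ?_, ?_⟩
      · set LB : ℝ := ∑ i ∈ B, |h i| with hLB
        set LR : ℝ := ∑ i ∈ A \ B, |h i| with hLR
        have hLBnn : 0 ≤ LB := Finset.sum_nonneg fun _ _ => abs_nonneg _
        have hsplitsum : LR + LB = ∑ i ∈ A, |h i| := Finset.sum_sdiff hBA
        have hxBsq : xB ^ 2 ≤ c * LB := by
          rw [hxB, rst_sq_sum, hLB, Finset.mul_sum]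
          refine Finset.sum_le_sum fun i hi => ?_
          have := hAc i (hBA hi)
          nlinarith [abs_nonneg (h i), sq_abs (h i)]
        have hxBs : xB * Real.sqrt (2*(m:ℝ)) ≤ (m:ℝ) * c + LB / 2 := by
          refine le_of_sq_le_sq'' (by positivity) ?_ (mul_nonneg hxB0 hs0)
          rw [mul_pow, hs2]
          nlinarith [sq_nonneg ((m:ℝ)*c - LB/2), mul_nonneg hc hLBnn]
        have hmc' : (m:ℝ) * c' ≤ LB / 2 := by nlinarith
        calc (xB + S') * Real.sqrt (2*(m:ℝ))
            = xB * Real.sqrt (2*(m:ℝ)) + S' * Real.sqrt (2*(m:ℝ)) := by ring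
          _ ≤ ((m:ℝ) * c + LB / 2) + ((m:ℝ) * c' + LR) := add_le_add hxBs hS'bd
          _ ≤ ((m:ℝ) * c + LB / 2) + (LB / 2 + LR) := by linarith
          _ = (m:ℝ) * c + ∑ i ∈ A, |h i| := by rw [← hsplitsum]; ring
      · have hAdd : rst A h = rst B h + rst (A \ B) h := by
          funext i
          simp only [rst, Pi.add_apply]
          by_cases hB : i ∈ B
          · have hiA : i ∈ A := hBA hB
            have : i ∉ A \ B := fun hmem => (Finset.mem_sdiff.mp hmem).2 hB
            simp [hB, hiA, this]
          · by_cases hiA : i ∈ A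
            · have : i ∈ A \ B := Finset.mem_sdiff.mpr ⟨hiA, hB⟩
              simp [hB, hiA, this]
            · have : i ∉ A \ B := fun hmem => hiA (Finset.mem_sdiff.mp hmem).1
              simp [hB, hiA, this]
        have hdisjB : ∀ i, rst B h i = 0 ∨ u i = 0 := by
          intro i
          by_cases hi : i ∈ B
          · exact Or.inr (hAu i (hBA hi))
          · exact Or.inl (if_neg hi)
        have hθB := hθprop (rst B h) u (rst_sparse B h hBcard.le) hu hdisjB
        have hmv : F.mulVec (rst A h) = F.mulVec (rst B h) + F.mulVec (rst (A \ B) h) := by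
          rw [hAdd, Matrix.mulVec_add]
        calc |∑ k, F.mulVec (rst A h) k * F.mulVec u k|
            = |(∑ k, F.mulVec (rst B h) k * F.mulVec u k)
                + ∑ k, F.mulVec (rst (A \ B) h) k * F.mulVec u k| := by
              rw [hmv, ← Finset.sum_add_distrib]
              congr 1
              refine Finset.sum_congr rfl fun k _ => ?_
              simp only [Pi.add_apply]
              ring
          _ ≤ |∑ k, F.mulVec (rst B h) k * F.mulVec u k|
                + |∑ k, F.mulVec (rst (A \ B) h) k * F.mulVec u k| := abs_add_le _ _
          _ ≤ θ * (xB * l2norm u) + θ * (S' * l2norm u) := add_le_add hθB hS'θ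
          _ = θ * ((xB + S') * l2norm u) := by ring
      · have hsq : ∑ i ∈ A, (h i)^2 = (∑ i ∈ A \ B, (h i)^2) + ∑ i ∈ B, (h i)^2 :=
          (Finset.sum_sdiff hBA).symm
        have hBsq : ∑ i ∈ B, (h i)^2 = xB^2 := (rst_sq_sum B h).symm
        rw [hsq, hBsq]
        nlinarith [mul_nonneg hxB0 hS'0]

end NRAux

open NRAux

set_option maxHeartbeats 1000000 in
/-- Noiseless recovery error bound. With `k = 2*m` even, if
`δ_{1.5k} + θ_{k,1.5k} < 1` and `β̂` minimizes the ℓ₁ norm subject to `Fγ = Fβ`, then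
`‖β̂ - β‖₂ ≤ C₀ k^{-1/2} ‖β_{-max(k)}‖₁` where
`C₀ = 2√2(1 - δ_{1.5k}) / (1 - δ_{1.5k} - θ_{k,1.5k})`. The set `T` consists of indices of
the `k` largest-in-absolute-value entries of `β`, so `∑ j ∉ T, |β j| = ‖β_{-max(k)}‖₁`. -/
theorem noiseless_recovery_error {n p m : ℕ} (F : Matrix (Fin n) (Fin p) ℝ)
    (hm : 1 ≤ m) (hp : 5 * m ≤ p)
    (hcond : ripConst F (3 * m) + roConst F (2 * m) (3 * m) < 1)
    (β : Fin p → ℝ) (y : Fin n → ℝ) (hy : y = F.mulVec β)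
    (βhat : Fin p → ℝ) (hfeas : F.mulVec βhat = y)
    (hmin : ∀ γ : Fin p → ℝ, F.mulVec γ = y → l1norm βhat ≤ l1norm γ)
    (T : Finset (Fin p)) (hT : T.card = 2 * m)
    (hTmax : ∀ i ∈ T, ∀ j ∉ T, |β j| ≤ |β i|) :
    l2norm (fun i => βhat i - β i) ≤
      (2 * Real.sqrt 2 * (1 - ripConst F (3 * m)) /
        (1 - ripConst F (3 * m) - roConst F (2 * m) (3 * m))) *
      ((Real.sqrt (2 * m))⁻¹ * ∑ j ∈ Tᶜ, |β j|) := by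
  set δ : ℝ := ripConst F (3 * m) with hδdef
  set θ : ℝ := roConst F (2 * m) (3 * m) with hθdef
  have hδspec := ripConst_spec F (3 * m) (by omega) (by omega)
  obtain ⟨hθ0, hθspec⟩ := roConst_spec F (2 * m) (3 * m) (by omega) (by omega) (by omega)
  rw [← hθdef] at hθ0 hθspec
  rw [← hδdef] at hδspec
  have hδ1 : δ < 1 := by linarith
  have h1δ : (0:ℝ) ≤ 1 - δ := by linarith
  have hDθ : 0 < 1 - δ - θ := by linarith
  -- the error vector
  set d : Fin p → ℝ := fun i => βhat i - β i with hddef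
  have hFd : F.mulVec d = 0 := by
    have h1 : d = βhat - β := rfl
    rw [h1, Matrix.mulVec_sub, hfeas, hy, sub_self]
  -- the cone constraint
  set e : ℝ := ∑ j ∈ Tᶜ, |β j| with hedef
  have he0 : 0 ≤ e := Finset.sum_nonneg fun _ _ => abs_nonneg _
  have hcone : ∑ i ∈ Tᶜ, |d i| ≤ (∑ i ∈ T, |d i|) + 2 * e := by
    have hfeasβ : F.mulVec β = y := hy.symm
    have hl1 : l1norm βhat ≤ l1norm β := hmin β hfeasβ
    have hsplit1 : (∑ i ∈ T, |βhat i|) + ∑ i ∈ Tᶜ, |βhat i| = l1norm βhat :=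
      Finset.sum_add_sum_compl T _
    have hsplit2 : (∑ i ∈ T, |β i|) + ∑ i ∈ Tᶜ, |β i| = l1norm β :=
      Finset.sum_add_sum_compl T _
    have hA : ∑ i ∈ T, (|β i| - |d i|) ≤ ∑ i ∈ T, |βhat i| := by
      refine Finset.sum_le_sum fun i _ => ?_
      have : |β i| ≤ |βhat i| + |d i| := by
        have h1 : β i = βhat i - d i := by simp [hddef]
        rw [h1]
        exact (abs_sub _ _)
      linarith
    have hB : ∑ i ∈ Tᶜ, (|d i| - |β i|) ≤ ∑ i ∈ Tᶜ, |βhat i| := by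
      refine Finset.sum_le_sum fun i _ => ?_
      have : |d i| ≤ |βhat i| + |β i| := by
        have h1 : d i = βhat i - β i := rfl
        rw [h1]
        exact (abs_sub _ _)
      linarith
    rw [Finset.sum_sub_distrib] at hA hB
    linarith
  -- select the m largest entries of d outside T
  have hTc : Tᶜ.card = p - 2 * m := by
    rw [Finset.card_compl, hT, Fintype.card_fin]
  obtain ⟨T1, hT1sub, hT1card, hT1top⟩ := topSubset d m Tᶜ (by omega)
  have hT1ne : T1.Nonempty := Finset.card_pos.mp (by omega)
  obtain ⟨i₁, hi₁T1, hi₁min⟩ := Finset.exists_min_image T1 (fun i => |d i|) hT1ne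
  set c₁ : ℝ := |d i₁| with hc₁def
  set U : Finset (Fin p) := T ∪ T1 with hUdef
  have hUcard : U.card ≤ 3 * m := by
    rw [hUdef]
    have := Finset.card_union_le T T1
    omega
  set u : Fin p → ℝ := rst U d with hudef
  have husp : IsSparse (3 * m) u := rst_sparse U d hUcard
  set A : Finset (Fin p) := Tᶜ \ T1 with hAdef
  have hAu : ∀ i ∈ A, u i = 0 := by
    intro i hi
    obtain ⟨hiTc, hiT1⟩ := Finset.mem_sdiff.mp hi
    have hiT : i ∉ T := Finset.mem_compl.mp hiTc
    have : i ∉ U := by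
      simp only [hUdef, Finset.mem_union]
      tauto
    exact if_neg this
  have hAc : ∀ i ∈ A, |d i| ≤ c₁ := fun i hi => hT1top i hi i₁ hi₁T1
  obtain ⟨S, hS0, hSbd, hSθ, hSsq⟩ :=
    blockDecomp F θ hθspec d u husp hm A.card A le_rfl hAu c₁ (abs_nonneg _) hAc
  set x : ℝ := l2norm u with hxdef
  have hx0 : 0 ≤ x := l2norm_nonneg' _
  set s : ℝ := Real.sqrt (2 * (m:ℝ)) with hsdef
  have hspos : 0 < s := Real.sqrt_pos.mpr (by positivity)
  have hs2 : s ^ 2 = 2 * (m:ℝ) := Real.sq_sqrt (by positivity)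
  -- key1 : (1-δ) x² ≤ θ S x
  have key1 : (1 - δ) * x ^ 2 ≤ θ * (S * x) := by
    have hlow := (hδspec u husp).1
    have h1 : (1 - δ) * x ^ 2 ≤ l2norm (F.mulVec u) ^ 2 := by
      have := pow_le_pow_left₀ (mul_nonneg (Real.sqrt_nonneg _) hx0) hlow 2
      rwa [mul_pow, Real.sq_sqrt h1δ] at this
    have hdecomp : u + rst A d = d := by
      funext i
      simp only [Pi.add_apply, hudef, hAdef, rst]
      by_cases hiU : i ∈ U
      · have hiA : i ∉ Tᶜ \ T1 := by
          rcases Finset.mem_union.mp hiU with h | h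
          · intro hc
            exact (Finset.mem_compl.mp (Finset.mem_sdiff.mp hc).1) h
          · intro hc
            exact (Finset.mem_sdiff.mp hc).2 h
        simp [hiU, hiA]
      · have hiT : i ∉ T := fun h => hiU (Finset.mem_union_left _ h)
        have hiT1 : i ∉ T1 := fun h => hiU (Finset.mem_union_right _ h)
        have hiA : i ∈ Tᶜ \ T1 := Finset.mem_sdiff.mpr ⟨Finset.mem_compl.mpr hiT, hiT1⟩
        simp [hiU, hiA]
    have hFu : F.mulVec u = -F.mulVec (rst A d) := by
      have h2 : F.mulVec u + F.mulVec (rst A d) = 0 := by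
        rw [← Matrix.mulVec_add, hdecomp, hFd]
      exact eq_neg_of_add_eq_zero_left h2
    have h3 : l2norm (F.mulVec u) ^ 2 = ∑ k, F.mulVec u k ^ 2 := l2norm_sq _
    have h4 : l2norm (F.mulVec u) ^ 2 ≤ |∑ k, F.mulVec (rst A d) k * F.mulVec u k| := by
      rw [h3]
      have h5 : ∀ k, F.mulVec u k ^ 2 = -(F.mulVec (rst A d) k * F.mulVec u k) := by
        intro k
        simp only [hFu, Pi.neg_apply]
        ring
      simp_rw [h5]
      rw [Finset.sum_neg_distrib]
      exact neg_le_abs _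
    exact le_trans (le_trans h1 h4) hSθ
  -- key2 : S s ≤ s x + 2 e
  have hT1sumlb : (m:ℝ) * c₁ ≤ ∑ i ∈ T1, |d i| := by
    have h6 := Finset.card_nsmul_le_sum T1 (fun i => |d i|) c₁ (fun i hi => hi₁min i hi)
    rw [hT1card, nsmul_eq_mul] at h6
    exact_mod_cast h6
  have hsplitTc : (∑ i ∈ A, |d i|) + ∑ i ∈ T1, |d i| = ∑ i ∈ Tᶜ, |d i| :=
    Finset.sum_sdiff hT1sub
  have hCS : ∑ i ∈ T, |d i| ≤ s * x := by
    have hcs := Finset.sum_mul_sq_le_sq_mul_sq T (fun _ => (1:ℝ)) (fun i => |d i|)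
    have h1 : (∑ i ∈ T, |d i|) ^ 2 ≤ (T.card : ℝ) * ∑ i ∈ T, d i ^ 2 := by
      simpa [sq_abs, mul_comm] using hcs
    have h2 : ∑ i ∈ T, d i ^ 2 ≤ x ^ 2 := by
      rw [hxdef, hudef, rst_sq_sum]
      exact Finset.sum_le_sum_of_subset_of_nonneg Finset.subset_union_left
        (fun _ _ _ => sq_nonneg _)
    refine le_of_sq_le_sq'' (mul_nonneg hspos.le hx0) ?_
      (Finset.sum_nonneg fun _ _ => abs_nonneg _)
    rw [mul_pow, hs2]
    rw [hT] at h1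
    push_cast at h1
    nlinarith [h2]
  have key2 : S * s ≤ s * x + 2 * e := by
    calc S * s ≤ (m:ℝ) * c₁ + ∑ i ∈ A, |d i| := hSbd
      _ ≤ (∑ i ∈ T1, |d i|) + ∑ i ∈ A, |d i| := by linarith
      _ = ∑ i ∈ Tᶜ, |d i| := by rw [← hsplitTc]; ring
      _ ≤ (∑ i ∈ T, |d i|) + 2 * e := hcone
      _ ≤ s * x + 2 * e := by linarith
  -- key3
  have hUcompl : Uᶜ = A := by
    ext i
    simp only [Finset.mem_compl, hUdef, Finset.mem_union, hAdef, Finset.mem_sdiff,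
      Finset.mem_compl]
    tauto
  have key3 : l2norm d ^ 2 ≤ x ^ 2 + S ^ 2 := by
    have h1 : l2norm d ^ 2 = ∑ i, d i ^ 2 := l2norm_sq d
    have h2 : (∑ i ∈ U, d i ^ 2) + ∑ i ∈ Uᶜ, d i ^ 2 = ∑ i, d i ^ 2 :=
      Finset.sum_add_sum_compl U _
    have h3 : x ^ 2 = ∑ i ∈ U, d i ^ 2 := by rw [hxdef, hudef]; exact rst_sq_sum U d
    rw [h1, ← h2, hUcompl]
    linarith [hSsq]
  -- final arithmetic
  set q : ℝ := 2 * e / s with hqdef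
  have hq0 : 0 ≤ q := by positivity
  have hqs : q * s = 2 * e := by
    rw [hqdef]
    field_simp
  clear_value q x s e d θ δ
  have hSxq : S ≤ x + q := by nlinarith [key2, hqs, hspos]
  have hxDθ : x * (1 - δ - θ) ≤ θ * q := by
    rcases eq_or_lt_of_le hx0 with hx | hx
    · rw [← hx, zero_mul]
      exact mul_nonneg hθ0 hq0
    · have hmm : θ * (S * x) ≤ θ * ((x + q) * x) := by
        apply mul_le_mul_of_nonneg_left _ hθ0
        exact mul_le_mul_of_nonneg_right hSxq hx0
      nlinarith [key1, hmm, hx]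
  have hw : (x + q) * (1 - δ - θ) ≤ (1 - δ) * q := by nlinarith [hxDθ, hq0, hDθ]
  have hwle : x + q ≤ (1 - δ) * q / (1 - δ - θ) := by
    rw [le_div_iff₀ hDθ]
    exact hw
  have hS2 : S ^ 2 ≤ (x + q) ^ 2 := by nlinarith [hSxq, hS0]
  have hx2 : x ^ 2 ≤ (x + q) ^ 2 := by nlinarith [hx0, hq0]
  have hl2sq : l2norm d ^ 2 ≤ 2 * (x + q) ^ 2 := by linarith [key3]
  have hfin : l2norm d ≤ Real.sqrt 2 * (x + q) := by
    refine le_of_sq_le_sq'' (mul_nonneg (Real.sqrt_nonneg _) (by positivity)) ?_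
      (l2norm_nonneg' _)
    rw [mul_pow, Real.sq_sqrt (by norm_num : (0:ℝ) ≤ 2)]
    linarith
  have hfin2 : l2norm d ≤ Real.sqrt 2 * ((1 - δ) * q / (1 - δ - θ)) :=
    le_trans hfin (mul_le_mul_of_nonneg_left hwle (Real.sqrt_nonneg _))
  have hrhs : 2 * Real.sqrt 2 * (1 - δ) / (1 - δ - θ) * (s⁻¹ * e)
      = Real.sqrt 2 * ((1 - δ) * q / (1 - δ - θ)) := by
    rw [hqdef]
    field_simp
  rw [hrhs]
  exact hfin2
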